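/- Let k ≥ 2 be an integer, let A be a k-primitive set of integers greater than 1, and let T be a finite subset of A with |𝒫(T)| = n. If n ≤ k, then |T| ≤ n. -/

import Mathlib

open scoped BigOperators ENNReal

/-- `primesOf A` is the set `𝒫(A)` of primes dividing some member of `A`. -/
def primesOf (A : Set ℕ) : Set ℕ := {p : ℕ | p.Prime ∧ ∃ n ∈ A, p ∣ n}

/-- A set of integers greater than 1 is *primitive* if no element divides another. -/
def Primitive (A : Set ℕ) : Prop :=
  (∀ n ∈ A, 1 < n) ∧ ∀ a ∈ A, ∀ b ∈ A, a ≠ b → ¬a ∣ b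

/-- A set `A` of integers greater than 1 with `|A| ≥ k + 1` is *k-primitive* if no element
divides the product of `k` distinct other elements of `A`. -/
def KPrimitive (k : ℕ) (A : Set ℕ) : Prop :=
  (∀ n ∈ A, 1 < n) ∧ (k : ℕ∞) + 1 ≤ A.encard ∧
    ∀ a ∈ A, ∀ B : Finset ℕ, ↑B ⊆ A \ {a} → B.card = k → ¬a ∣ ∏ b ∈ B, b

/-- If `A` is `k`-primitive (`k ≥ 2`) and `T ⊆ A` is finite with `|𝒫(T)| = n ≤ k`,
then `|T| ≤ n`. -/
theorem card_le_of_primesOf_card_le (k : ℕ) (hk : 2 ≤ k) (A : Set ℕ) (hA : KPrimitive k A)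
    (T : Finset ℕ) (hTA : ↑T ⊆ A) (n : ℕ) (hn : (primesOf ↑T).ncard = n) (hnk : n ≤ k) :
    T.card ≤ n := by
  by_contra hlt
  push_neg at hlt
  obtain ⟨h1, h2, h3⟩ := hA
  have hT1 : ∀ t ∈ T, 1 < t := fun t ht => h1 t (hTA ht)
  have hT0 : ∀ t ∈ T, t ≠ 0 := fun t ht => by have := hT1 t ht; omega
  have hTne : T.Nonempty := Finset.card_pos.mp (by omega)
  set P : Finset ℕ := T.biUnion Nat.primeFactors with hP
  have hPT : primesOf ↑T = ↑P := by
    ext p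
    simp only [primesOf, Set.mem_setOf_eq, hP, Finset.coe_biUnion, Finset.mem_coe,
      Set.mem_iUnion, Nat.mem_primeFactors]
    constructor
    · rintro ⟨hp, t, ht, hdvd⟩; exact ⟨t, ht, hp, hdvd, hT0 t ht⟩
    · rintro ⟨t, ht, hp, hdvd, _⟩; exact ⟨hp, t, ht, hdvd⟩
  have hPcard : P.card = n := by
    rw [hPT] at hn; simpa using hn
  choose g hg1 hg2 using fun p => T.exists_max_image (fun b => b.factorization p) hTne
  set S : Finset ℕ := P.image g with hS
  have hSsubT : S ⊆ T := by
    intro x hx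
    simp only [hS, Finset.mem_image] at hx
    obtain ⟨p, _, rfl⟩ := hx
    exact hg1 p
  have hScard : S.card ≤ n := le_trans Finset.card_image_le (le_of_eq hPcard)
  obtain ⟨t, htT, htS⟩ : ∃ t ∈ T, t ∉ S := by
    by_contra h; push_neg at h
    have := Finset.card_le_card (fun x hx => h x hx)
    omega
  have hprod0 : (∏ b ∈ S, b) ≠ 0 :=
    Finset.prod_ne_zero_iff.mpr (fun b hb => hT0 b (hSsubT hb))
  have hdvd : t ∣ ∏ b ∈ S, b := by
    rw [← Nat.factorization_le_iff_dvd (hT0 t htT) hprod0,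
      Nat.factorization_prod (fun b hb => hT0 b (hSsubT hb))]
    rw [Finsupp.le_def]
    intro p
    rcases Nat.eq_zero_or_pos (t.factorization p) with h0 | hpos
    · simp [h0]
    · have hp : p ∈ P := by
        have hp' : p ∈ t.primeFactors := by
          rw [← Nat.support_factorization]
          exact Finsupp.mem_support_iff.mpr (by omega)
        exact Finset.mem_biUnion.mpr ⟨t, htT, hp'⟩
      have hgp : g p ∈ S := Finset.mem_image_of_mem g hp
      rw [Finset.sum_apply']
      calc t.factorization p ≤ (g p).factorization p := hg2 p t htT
        _ ≤ ∑ b ∈ S, b.factorization p :=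
          Finset.single_le_sum (f := fun b => b.factorization p) (fun b _ => Nat.zero_le _) hgp
  -- extend S to a set of size k inside A \ {t}
  have htA : t ∈ A := hTA htT
  have hSsub : (S : Set ℕ) ⊆ A \ {t} := by
    intro x hx
    exact ⟨hTA (hSsubT hx), by simp only [Set.mem_singleton_iff]; rintro rfl; exact htS hx⟩
  have hSenc : (S : Set ℕ).encard ≤ (k : ℕ∞) := by
    rw [Set.encard_coe_eq_coe_finsetCard]
    exact_mod_cast le_trans hScard hnk
  have hAenc : (k : ℕ∞) ≤ (A \ {t}).encard := by
    have := Set.encard_diff_singleton_add_one htA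
    have h2' := h2
    rw [← this] at h2'
    exact WithTop.le_of_add_le_add_right ENat.one_ne_top h2'
  obtain ⟨r, hSr, hrA, hrcard⟩ :=
    Set.exists_superset_subset_encard_eq hSsub hSenc hAenc
  have hrfin : r.Finite := Set.finite_of_encard_eq_coe hrcard
  set B : Finset ℕ := hrfin.toFinset with hB
  have hBA : (B : Set ℕ) ⊆ A \ {t} := by rw [hB, Set.Finite.coe_toFinset]; exact hrA
  have hBcard : B.card = k := by
    have : (B : Set ℕ).encard = (k : ℕ∞) := by
      rw [hB, Set.Finite.coe_toFinset]; exact hrcard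
    rw [Set.encard_coe_eq_coe_finsetCard] at this
    exact_mod_cast this
  have hSB : S ⊆ B := by
    intro x hx
    rw [hB, Set.Finite.mem_toFinset]
    exact hSr hx
  exact h3 t htA B hBA hBcard
    (dvd_trans hdvd (Finset.prod_dvd_prod_of_subset S B _ hSB))
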